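/- Under the CAR setup and the bootstrap-weight assumption, for every s ∈ 𝒮: (D_nʷ(s) − D_n(s))/n(s) → 0 in probability, and max_{s∈𝒮} |D_nʷ(s)/nʷ(s)| → 0 in probability, where D_nʷ(s) = Σ_{i≤n} ξ_i (A_i − π(s)) 1{S_i = s}, D_n(s) = Σ_{i≤n} (A_i − π(s)) 1{S_i = s}, n(s) = Σ_{i≤n} 1{S_i = s}, and nʷ(s) = Σ_{i≤n} ξ_i 1{S_i = s} (ratios interpreted as 0 when the denominator is 0). -/

import Mathlib

open MeasureTheory ProbabilityTheory Filter
open scoped Classical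

namespace BootstrapAux

variable {Ω : Type*} [MeasurableSpace Ω] {μ : Measure Ω} [IsProbabilityMeasure μ]

lemma integrable_of_integral_eq_one {f : Ω → ℝ} (h : ∫ ω, f ω ∂μ = 1) : Integrable f μ := by
  by_contra hf
  rw [integral_undef hf] at h
  norm_num at h

lemma moment_bound {β : Type*} [MeasurableSpace β]
    (ξ : ℕ → Ω → ℝ) (hξm : ∀ i, Measurable (ξ i))
    (hξindep : iIndepFun ξ μ)
    (hξident : ∀ i, IdentDistrib (ξ i) (ξ 0) μ μ)
    (hξmean : ∫ ω, ξ 0 ω ∂μ = 1)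
    (hξvar : ∫ ω, (ξ 0 ω - 1) ^ 2 ∂μ = 1)
    (D : Ω → β) (hDm : Measurable D)
    (hInd : IndepFun (fun ω (i : ℕ) => ξ i ω) D μ)
    (n : ℕ) (c : ℕ → β → ℝ) (hcm : ∀ i, Measurable (c i)) (hc1 : ∀ i b, |c i b| ≤ 1)
    (v : β → ℝ) (hvm : Measurable v) (hv0 : ∀ b, 0 ≤ v b) (hv1 : ∀ b, v b ≤ 1)
    (H : β → ℝ) (hHm : Measurable H) (hH1 : ∀ b, |H b| ≤ 1)
    (hbound : ∀ b, (∑ i ∈ Finset.range n, (c i b) ^ 2) * (v b) ^ 2 ≤ H b) :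
    ∫ ω, ((∑ i ∈ Finset.range n, (ξ i ω - 1) * c i (D ω)) * v (D ω)) ^ 2 ∂μ
      ≤ ∫ ω, H (D ω) ∂μ := by
  have hξint : ∀ i, Integrable (ξ i) μ := fun i =>
    (hξident i).integrable_iff.2 (integrable_of_integral_eq_one hξmean)
  have hηm : ∀ i, Measurable (fun ω => ξ i ω - 1) := fun i => (hξm i).sub_const 1
  have hηint : ∀ i, Integrable (fun ω => ξ i ω - 1) μ := fun i =>
    (hξint i).sub (integrable_const 1)
  have hsqmeas : Measurable (fun x : ℝ => (x - 1) ^ 2) := by fun_prop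
  have hsqident : ∀ i, IdentDistrib (fun ω => (ξ i ω - 1) ^ 2)
      (fun ω => (ξ 0 ω - 1) ^ 2) μ μ := fun i => (hξident i).comp hsqmeas
  have hsqint : ∀ i, Integrable (fun ω => (ξ i ω - 1) ^ 2) μ := fun i =>
    (hsqident i).integrable_iff.2 (integrable_of_integral_eq_one hξvar)
  have hηmean : ∀ i, ∫ ω, (ξ i ω - 1) ∂μ = 0 := by
    intro i
    rw [integral_sub (hξint i) (integrable_const 1), ((hξident i).integral_eq), hξmean]
    simp
  have hηsq : ∀ i, ∫ ω, (ξ i ω - 1) ^ 2 ∂μ = 1 := fun i => by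
    rw [(hsqident i).integral_eq, hξvar]
  have hcross : ∀ i j, i ≠ j → ∫ ω, (ξ i ω - 1) * (ξ j ω - 1) ∂μ = 0 := by
    intro i j hij
    have h1 : IndepFun (fun ω => ξ i ω - 1) (fun ω => ξ j ω - 1) μ :=
      (hξindep.indepFun hij).comp (measurable_id.sub_const 1) (measurable_id.sub_const 1)
    rw [h1.integral_fun_mul_eq_mul_integral (hηm i).aestronglyMeasurable (hηm j).aestronglyMeasurable,
      hηmean i, hηmean j, mul_zero]
  -- the data-side factors
  set g : ℕ → ℕ → β → ℝ := fun i j b => c i b * c j b * v b ^ 2 with hg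
  have hgm : ∀ i j, Measurable (g i j) := fun i j =>
    ((hcm i).mul (hcm j)).mul (hvm.pow_const 2)
  have hgb : ∀ i j b, |g i j b| ≤ 1 := by
    intro i j b
    have h1 : |g i j b| = |c i b| * |c j b| * |v b| ^ 2 := by
      rw [hg]; rw [abs_mul, abs_mul, abs_pow]
    rw [h1]
    have h2 : |v b| ≤ 1 := by rw [abs_of_nonneg (hv0 b)]; exact hv1 b
    have h3 : |c i b| * |c j b| ≤ 1 := mul_le_one₀ (hc1 i b) (abs_nonneg _) (hc1 j b)
    have h4 : |v b| ^ 2 ≤ 1 := pow_le_one₀ (abs_nonneg _) h2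
    exact mul_le_one₀ h3 (by positivity) h4
  have hmulint : ∀ i j, Integrable (fun ω => (ξ i ω - 1) * (ξ j ω - 1)) μ := by
    intro i j
    rcases eq_or_ne i j with rfl | hij
    · simpa [sq] using hsqint i
    · have := ((hξindep.indepFun hij).comp (measurable_id.sub_const 1)
        (measurable_id.sub_const 1)).integrable_mul (hηint i) (hηint j)
      exact this
  have htermint : ∀ i j, Integrable
      (fun ω => (ξ i ω - 1) * (ξ j ω - 1) * g i j (D ω)) μ := by
    intro i j
    have := (hmulint i j).bdd_mul (c := 1) (((hgm i j).comp hDm).aestronglyMeasurable)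
      (ae_of_all _ fun ω => by simpa [Real.norm_eq_abs] using hgb i j (D ω))
    -- `this : Integrable (fun ω => g i j (D ω) * ((ξ i ω - 1) * (ξ j ω - 1)))`
    exact this.congr (ae_of_all _ fun ω => by simp only [hg, Function.comp_apply]; ring)
  have hgint : ∀ i j, Integrable (fun ω => g i j (D ω)) μ := by
    intro i j
    refine Integrable.mono' (integrable_const (1 : ℝ))
      ((hgm i j).comp hDm).aestronglyMeasurable (ae_of_all _ fun ω => ?_)
    simpa [Real.norm_eq_abs] using hgb i j (D ω)
  have expand : ∀ ω, ((∑ i ∈ Finset.range n, (ξ i ω - 1) * c i (D ω)) * v (D ω)) ^ 2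
      = ∑ i ∈ Finset.range n, ∑ j ∈ Finset.range n,
          (ξ i ω - 1) * (ξ j ω - 1) * g i j (D ω) := by
    intro ω
    rw [mul_pow, sq, Finset.sum_mul_sum, Finset.sum_mul]
    refine Finset.sum_congr rfl fun i _ => ?_
    rw [Finset.sum_mul]
    refine Finset.sum_congr rfl fun j _ => ?_
    rw [hg]; ring
  have hint : ∫ ω, ((∑ i ∈ Finset.range n, (ξ i ω - 1) * c i (D ω)) * v (D ω)) ^ 2 ∂μ
      = ∑ i ∈ Finset.range n, ∑ j ∈ Finset.range n,
          ∫ ω, (ξ i ω - 1) * (ξ j ω - 1) * g i j (D ω) ∂μ := by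
    simp_rw [expand]
    rw [integral_finset_sum _ (fun i _ => integrable_finset_sum _ (fun j _ => htermint i j))]
    exact Finset.sum_congr rfl fun i _ => integral_finset_sum _ fun j _ => htermint i j
  have hfactor : ∀ i j, ∫ ω, (ξ i ω - 1) * (ξ j ω - 1) * g i j (D ω) ∂μ
      = (∫ ω, (ξ i ω - 1) * (ξ j ω - 1) ∂μ) * ∫ ω, g i j (D ω) ∂μ := by
    intro i j
    have hF : Measurable (fun x : ℕ → ℝ => (x i - 1) * (x j - 1)) :=
      ((measurable_pi_apply i).sub_const 1).mul ((measurable_pi_apply j).sub_const 1)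
    have h1 := (hInd.comp hF (hgm i j)).integral_fun_mul_eq_mul_integral
      ((hF.comp (measurable_pi_lambda _ fun i => hξm i)).aestronglyMeasurable)
      ((hgm i j).comp hDm).aestronglyMeasurable
    simpa [Function.comp] using h1
  rw [hint]
  have hdiag : ∀ i ∈ Finset.range n,
      (∑ j ∈ Finset.range n, ∫ ω, (ξ i ω - 1) * (ξ j ω - 1) * g i j (D ω) ∂μ)
        = ∫ ω, g i i (D ω) ∂μ := by
    intro i hi
    rw [Finset.sum_eq_single_of_mem i hi]
    · rw [hfactor i i]
      have : ∫ ω, (ξ i ω - 1) * (ξ i ω - 1) ∂μ = 1 := by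
        rw [show (fun ω => (ξ i ω - 1) * (ξ i ω - 1)) = fun ω => (ξ i ω - 1) ^ 2 by
          funext ω; ring]
        exact hηsq i
      rw [this, one_mul]
    · intro j _ hji
      rw [hfactor i j, hcross i j (fun h => hji h.symm), zero_mul]
  rw [Finset.sum_congr rfl hdiag]
  rw [← integral_finset_sum _ (fun i _ => hgint i i)]
  refine integral_mono (integrable_finset_sum _ fun i _ => hgint i i) ?_ ?_
  · refine Integrable.mono' (integrable_const (1 : ℝ))
      (hHm.comp hDm).aestronglyMeasurable (ae_of_all _ fun ω => ?_)
    simpa [Real.norm_eq_abs] using hH1 (D ω)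
  · intro ω
    show ∑ i ∈ Finset.range n, g i i (D ω) ≤ H (D ω)
    have h1 : ∑ i ∈ Finset.range n, g i i (D ω)
        = (∑ i ∈ Finset.range n, c i (D ω) ^ 2) * v (D ω) ^ 2 := by
      rw [Finset.sum_mul]
      exact Finset.sum_congr rfl fun i _ => by rw [hg]; ring
    rw [h1]
    exact hbound (D ω)

lemma tendsto_measure_of_sq_integral {T : ℕ → Ω → ℝ} {I : ℕ → ℝ}
    (hTint : ∀ n, Integrable (fun ω => T n ω ^ 2) μ)
    (hTI : ∀ n, ∫ ω, T n ω ^ 2 ∂μ ≤ I n)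
    (hI : Tendsto I atTop (nhds 0))
    {ε : ℝ} (hε : 0 < ε) :
    Tendsto (fun n => μ {ω | ε ≤ |T n ω|}) atTop (nhds 0) := by
  have hmono : ∀ n, μ {ω | ε ≤ |T n ω|} ≤ ENNReal.ofReal (I n / ε ^ 2) := by
    intro n
    have hsub : {ω | ε ≤ |T n ω|} ⊆ {ω | ε ^ 2 ≤ T n ω ^ 2} := by
      intro ω hω
      have h1 : ε ^ 2 ≤ |T n ω| ^ 2 := pow_le_pow_left₀ hε.le hω 2
      simpa [sq_abs] using h1
    have hmarkov := mul_meas_ge_le_integral_of_nonneg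
      (ae_of_all μ fun ω => sq_nonneg (T n ω)) (hTint n) (ε ^ 2)
    have h2 : (μ {ω | ε ≤ |T n ω|}).toReal ≤ (μ {ω | ε ^ 2 ≤ T n ω ^ 2}).toReal :=
      ENNReal.toReal_mono (measure_ne_top μ _) (measure_mono hsub)
    have h1 : (μ {ω | ε ≤ |T n ω|}).toReal ≤ I n / ε ^ 2 := by
      rw [le_div_iff₀ (by positivity)]
      calc (μ {ω | ε ≤ |T n ω|}).toReal * ε ^ 2
          ≤ (μ {ω | ε ^ 2 ≤ T n ω ^ 2}).toReal * ε ^ 2 := by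
            have := sq_nonneg ε; nlinarith
        _ = ε ^ 2 * (μ {ω | ε ^ 2 ≤ T n ω ^ 2}).toReal := by ring
        _ ≤ ∫ ω, T n ω ^ 2 ∂μ := hmarkov
        _ ≤ I n := hTI n
    calc μ {ω | ε ≤ |T n ω|}
        = ENNReal.ofReal ((μ {ω | ε ≤ |T n ω|}).toReal) :=
          (ENNReal.ofReal_toReal (measure_ne_top μ _)).symm
      _ ≤ ENNReal.ofReal (I n / ε ^ 2) := ENNReal.ofReal_le_ofReal h1
  have h2 : Tendsto (fun n => ENNReal.ofReal (I n / ε ^ 2)) atTop (nhds 0) := by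
    have h3 := hI.div_const (ε ^ 2)
    rw [zero_div] at h3
    simpa using ENNReal.tendsto_ofReal h3
  exact tendsto_of_tendsto_of_tendsto_of_le_of_le tendsto_const_nhds h2
    (fun n => zero_le) hmono

lemma prob_bound {β : Type*} [MeasurableSpace β]
    (ξ : ℕ → Ω → ℝ) (hξm : ∀ i, Measurable (ξ i))
    (hξindep : iIndepFun ξ μ)
    (hξident : ∀ i, IdentDistrib (ξ i) (ξ 0) μ μ)
    (hξmean : ∫ ω, ξ 0 ω ∂μ = 1)
    (hξvar : ∫ ω, (ξ 0 ω - 1) ^ 2 ∂μ = 1)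
    (D : Ω → β) (hDm : Measurable D)
    (hInd : IndepFun (fun ω (i : ℕ) => ξ i ω) D μ)
    (c : ℕ → ℕ → β → ℝ) (hcm : ∀ n i, Measurable (c n i)) (hc1 : ∀ n i b, |c n i b| ≤ 1)
    (v H : ℕ → β → ℝ) (hvm : ∀ n, Measurable (v n)) (hv0 : ∀ n b, 0 ≤ v n b)
    (hv1 : ∀ n b, v n b ≤ 1)
    (hHm : ∀ n, Measurable (H n)) (hH1 : ∀ n b, |H n b| ≤ 1)
    (hbound : ∀ n b, (∑ i ∈ Finset.range n, c n i b ^ 2) * v n b ^ 2 ≤ H n b)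
    (hIlim : Tendsto (fun n => ∫ ω, H n (D ω) ∂μ) atTop (nhds 0))
    {ε : ℝ} (hε : 0 < ε) :
    Tendsto (fun n => μ {ω | ε ≤
      |(∑ i ∈ Finset.range n, (ξ i ω - 1) * c n i (D ω)) * v n (D ω)|}) atTop (nhds 0) := by
  have hsqint : ∀ i, Integrable (fun ω => (ξ i ω - 1) ^ 2) μ := fun i =>
    (((hξident i).comp (show Measurable fun x : ℝ => (x - 1) ^ 2 by fun_prop)).integrable_iff).2
      (integrable_of_integral_eq_one hξvar)
  refine tendsto_measure_of_sq_integral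
    (T := fun n ω => (∑ i ∈ Finset.range n, (ξ i ω - 1) * c n i (D ω)) * v n (D ω))
    (I := fun n => ∫ ω, H n (D ω) ∂μ) ?_ ?_ hIlim hε
  · intro n
    refine Integrable.mono'
      ((integrable_finset_sum (Finset.range n) (fun i _ => hsqint i)).const_mul (n : ℝ)) ?_
      (ae_of_all _ fun ω => ?_)
    · apply Measurable.aestronglyMeasurable
      exact ((Finset.measurable_sum _ fun i _ =>
        ((hξm i).sub_const 1).mul ((hcm n i).comp hDm)).mul ((hvm n).comp hDm)).pow_const 2
    · rw [Real.norm_eq_abs, abs_of_nonneg (sq_nonneg _)]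
      have habs : |(∑ i ∈ Finset.range n, (ξ i ω - 1) * c n i (D ω)) * v n (D ω)|
          ≤ ∑ i ∈ Finset.range n, |ξ i ω - 1| := by
        rw [abs_mul]
        calc |∑ i ∈ Finset.range n, (ξ i ω - 1) * c n i (D ω)| * |v n (D ω)|
            ≤ |∑ i ∈ Finset.range n, (ξ i ω - 1) * c n i (D ω)| * 1 := by
              have h2 : |v n (D ω)| ≤ 1 := by
                rw [abs_of_nonneg (hv0 n (D ω))]; exact hv1 n (D ω)
              exact mul_le_mul_of_nonneg_left h2 (abs_nonneg _)
          _ = |∑ i ∈ Finset.range n, (ξ i ω - 1) * c n i (D ω)| := mul_one _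
          _ ≤ ∑ i ∈ Finset.range n, |(ξ i ω - 1) * c n i (D ω)| :=
              Finset.abs_sum_le_sum_abs _ _
          _ ≤ ∑ i ∈ Finset.range n, |ξ i ω - 1| := Finset.sum_le_sum fun i _ => by
              rw [abs_mul]
              exact mul_le_of_le_one_right (abs_nonneg _) (hc1 n i (D ω))
      calc ((∑ i ∈ Finset.range n, (ξ i ω - 1) * c n i (D ω)) * v n (D ω)) ^ 2
          = |(∑ i ∈ Finset.range n, (ξ i ω - 1) * c n i (D ω)) * v n (D ω)| ^ 2 :=
            (sq_abs _).symm
        _ ≤ (∑ i ∈ Finset.range n, |ξ i ω - 1|) ^ 2 :=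
            pow_le_pow_left₀ (abs_nonneg _) habs 2
        _ ≤ (Finset.range n).card * ∑ i ∈ Finset.range n, |ξ i ω - 1| ^ 2 :=
            sq_sum_le_card_mul_sum_sq
        _ = (n : ℝ) * ∑ i ∈ Finset.range n, (ξ i ω - 1) ^ 2 := by
            simp [sq_abs, Finset.card_range]
  · intro n
    exact moment_bound ξ hξm hξindep hξident hξmean hξvar D hDm hInd n (c n) (hcm n) (hc1 n)
      (v n) (hvm n) (hv0 n) (hv1 n) (H n) (hHm n) (hH1 n) (hbound n)


end BootstrapAux

set_option maxHeartbeats 2000000 in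
/-- Under covariate-adaptive randomization and the bootstrap-weight assumption,
`(D_nʷ(s) − D_n(s))/n(s) → 0` in probability for every stratum `s`, and
`max_{s} |D_nʷ(s)/nʷ(s)| → 0` in probability. -/
theorem bootstrap_imbalance_vanishes
    {Ω : Type*} [MeasurableSpace Ω] (μ : Measure Ω) [IsProbabilityMeasure μ]
    {𝒮 : Type*} [Fintype 𝒮] [Nonempty 𝒮] [MeasurableSpace 𝒮] [MeasurableSingletonClass 𝒮]
    {𝒳 : Type*} [MeasurableSpace 𝒳]
    (Y1 Y0 : ℕ → Ω → ℝ) (S : ℕ → Ω → 𝒮) (X : ℕ → Ω → 𝒳) (A : ℕ → ℕ → Ω → ℝ)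
    (π : 𝒮 → ℝ) (c : ℝ) (hc : 0 < c ∧ c < 1 / 2)
    (hπ : ∀ s, c < π s ∧ π s < 1 - c)
    (hY1m : ∀ i, Measurable (Y1 i)) (hY0m : ∀ i, Measurable (Y0 i))
    (hSm : ∀ i, Measurable (S i)) (hXm : ∀ i, Measurable (X i))
    (hAm : ∀ n i, Measurable (A n i))
    (hA01 : ∀ n i ω, A n i ω = 0 ∨ A n i ω = 1)
    (hindep : iIndepFun
      (fun i ω => (Y1 i ω, Y0 i ω, S i ω, X i ω)) μ)
    (hident : ∀ i, IdentDistrib (fun ω => (Y1 i ω, Y0 i ω, S i ω, X i ω))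
      (fun ω => (Y1 0 ω, Y0 0 ω, S 0 ω, X 0 ω)) μ μ)
    (hp : ∀ s, 0 < μ {ω | S 0 ω = s})
    (hD : ∀ s : 𝒮, ∀ ε : ℝ, 0 < ε → Tendsto (fun n =>
      μ {ω | ε ≤
        |(∑ i ∈ Finset.range n, (A n i ω - π s) * (if S i ω = s then (1 : ℝ) else 0)) /
          (∑ i ∈ Finset.range n, (if S i ω = s then (1 : ℝ) else 0))|}) atTop (nhds 0))
    -- bootstrap weights: i.i.d., nonnegative, mean one, variance one,
    -- sub-exponential upper tail, independent of the data and treatment indicators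
    (ξ : ℕ → Ω → ℝ) (hξm : ∀ i, Measurable (ξ i))
    (hξnonneg : ∀ i ω, 0 ≤ ξ i ω)
    (hξindep : iIndepFun ξ μ)
    (hξident : ∀ i, IdentDistrib (ξ i) (ξ 0) μ μ)
    (hξmean : ∫ ω, ξ 0 ω ∂μ = 1)
    (hξvar : ∫ ω, (ξ 0 ω - 1) ^ 2 ∂μ = 1)
    (hξtail : ∃ a b : ℝ, 0 < a ∧ 0 < b ∧
      ∀ t : ℝ, 0 ≤ t → (μ {ω | t ≤ ξ 0 ω}).toReal ≤ a * Real.exp (-b * t))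
    (hξdata : IndepFun (fun ω => (fun i : ℕ => ξ i ω))
      (fun ω => ((fun i : ℕ => (Y1 i ω, Y0 i ω, S i ω, X i ω)),
        (fun p : ℕ × ℕ => A p.1 p.2 ω))) μ) :
    (∀ s : 𝒮, ∀ ε : ℝ, 0 < ε → Tendsto (fun n =>
      μ {ω | ε ≤
        |((∑ i ∈ Finset.range n, ξ i ω * (A n i ω - π s) * (if S i ω = s then (1 : ℝ) else 0)) -
            (∑ i ∈ Finset.range n, (A n i ω - π s) * (if S i ω = s then (1 : ℝ) else 0))) /
          (∑ i ∈ Finset.range n, (if S i ω = s then (1 : ℝ) else 0))|}) atTop (nhds 0)) ∧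
    (∀ ε : ℝ, 0 < ε → Tendsto (fun n =>
      μ {ω | ε ≤
        Finset.univ.sup' Finset.univ_nonempty (fun s : 𝒮 =>
          |(∑ i ∈ Finset.range n, ξ i ω * (A n i ω - π s) * (if S i ω = s then (1 : ℝ) else 0)) /
            (∑ i ∈ Finset.range n, ξ i ω * (if S i ω = s then (1 : ℝ) else 0))|)})
      atTop (nhds 0)) := by
  have hπ01 : ∀ s, 0 < π s ∧ π s < 1 := fun s =>
    ⟨lt_trans hc.1 (hπ s).1, by linarith [(hπ s).2, hc.1]⟩
  -- the data map
  set D : Ω → (ℕ → ℝ × ℝ × 𝒮 × 𝒳) × (ℕ × ℕ → ℝ) :=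
    fun ω => ((fun i : ℕ => (Y1 i ω, Y0 i ω, S i ω, X i ω)),
      (fun p : ℕ × ℕ => A p.1 p.2 ω)) with hDdef
  have hDm : Measurable D := by
    refine Measurable.prodMk ?_ ?_
    · exact measurable_pi_lambda _ fun i =>
        ((hY1m i).prodMk ((hY0m i).prodMk ((hSm i).prodMk (hXm i))))
    · exact measurable_pi_lambda _ fun p => hAm p.1 p.2
  have hInd : IndepFun (fun ω (i : ℕ) => ξ i ω) D μ := hξdata
  -- indicator coefficients on the data space
  set indf : 𝒮 → ℕ → (ℕ → ℝ × ℝ × 𝒮 × 𝒳) × (ℕ × ℕ → ℝ) → ℝ :=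
    fun s i b => if (b.1 i).2.2.1 = s then (1:ℝ) else 0 with hinddef
  set Nb : 𝒮 → ℕ → (ℕ → ℝ × ℝ × 𝒮 × 𝒳) × (ℕ × ℕ → ℝ) → ℝ :=
    fun s n b => ∑ i ∈ Finset.range n, indf s i b with hNbdef
  have hindm : ∀ s i, Measurable (indf s i) := by
    intro s i
    have hb : Measurable (fun b : (ℕ → ℝ × ℝ × 𝒮 × 𝒳) × (ℕ × ℕ → ℝ) => (b.1 i).2.2.1) :=
      ((measurable_pi_apply i).comp measurable_fst).snd.snd.fst
    exact Measurable.ite (hb (measurableSet_singleton s)) measurable_const measurable_const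
  have hind01 : ∀ s i b, indf s i b = 0 ∨ indf s i b = 1 := by
    intro s i b
    by_cases h : (b.1 i).2.2.1 = s <;> simp [hinddef, h]
  have hind_nonneg : ∀ s i b, 0 ≤ indf s i b := by
    intro s i b; rcases hind01 s i b with h | h <;> rw [h] <;> norm_num
  have hNb_nonneg : ∀ s n b, 0 ≤ Nb s n b := fun s n b =>
    Finset.sum_nonneg fun i _ => hind_nonneg s i b
  have hNb_cases : ∀ s n b, Nb s n b = 0 ∨ 1 ≤ Nb s n b := by
    intro s n b
    rw [hNbdef]; dsimp only
    rw [hinddef]; dsimp only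
    rw [Finset.sum_boole]
    rcases Nat.eq_zero_or_pos ((Finset.range n).filter (fun i => (b.1 i).2.2.1 = s)).card
      with h | h
    · left; rw [h]; simp
    · right; exact_mod_cast h
  have hNbm : ∀ s n, Measurable (Nb s n) := fun s n =>
    Finset.measurable_sum _ fun i _ => hindm s i
  have hv_nonneg : ∀ s n b, 0 ≤ (Nb s n b)⁻¹ := fun s n b =>
    inv_nonneg.2 (hNb_nonneg s n b)
  have hvle : ∀ s n b, (Nb s n b)⁻¹ ≤ 1 := by
    intro s n b
    rcases hNb_cases s n b with h | h
    · rw [h]; norm_num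
    · rw [inv_le_one_iff₀]; right; exact h
  have hvabs : ∀ s n b, |(Nb s n b)⁻¹| ≤ 1 := fun s n b => by
    rw [abs_of_nonneg (hv_nonneg s n b)]; exact hvle s n b
  -- evaluation on the sample path
  have hind_eval : ∀ s i ω, indf s i (D ω) = (if S i ω = s then (1:ℝ) else 0) := by
    intro s i ω; rw [hinddef, hDdef]
  have hNb_eval : ∀ s n ω,
      Nb s n (D ω) = ∑ i ∈ Finset.range n, (if S i ω = s then (1:ℝ) else 0) := by
    intro s n ω
    rw [hNbdef]
  -- almost surely, the stratum counts tend to infinity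
  have hNtop : ∀ s : 𝒮, ∀ᵐ ω ∂μ, Tendsto (fun n => ∑ i ∈ Finset.range n,
      (if S i ω = s then (1:ℝ) else 0)) atTop atTop := by
    intro s
    have hq : Measurable (fun q : ℝ × ℝ × 𝒮 × 𝒳 => q.2.2.1) := measurable_snd.snd.fst
    have hφm : Measurable (fun q : ℝ × ℝ × 𝒮 × 𝒳 => if q.2.2.1 = s then (1:ℝ) else 0) :=
      Measurable.ite (hq (measurableSet_singleton s)) measurable_const measurable_const
    have hiid := hindep.comp
      (fun _ => (fun q : ℝ × ℝ × 𝒮 × 𝒳 => if q.2.2.1 = s then (1:ℝ) else 0)) (fun _ => hφm)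
    have hpair : Pairwise (Function.onFun (IndepFun · · μ)
        (fun i ω => if S i ω = s then (1:ℝ) else 0)) := by
      intro i j hij
      have := hiid.indepFun hij
      simpa [Function.comp_def] using this
    have hid : ∀ i, IdentDistrib (fun ω => if S i ω = s then (1:ℝ) else 0)
        (fun ω => if S 0 ω = s then (1:ℝ) else 0) μ μ := fun i => by
      have := (hident i).comp hφm
      simpa [Function.comp_def] using this
    have hint0 : Integrable (fun ω => if S 0 ω = s then (1:ℝ) else 0) μ := by
      refine Integrable.mono' (integrable_const (1:ℝ)) ?_ (ae_of_all _ fun ω => ?_)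
      · exact (Measurable.ite ((hSm 0) (measurableSet_singleton s)) measurable_const
          measurable_const).aestronglyMeasurable
      · rw [Real.norm_eq_abs]; split <;> simp
    have hslln := strong_law_ae_real (fun i ω => if S i ω = s then (1:ℝ) else 0) hint0 hpair hid
    have hmean : (μ[fun ω => if S 0 ω = s then (1:ℝ) else 0]) = (μ {ω | S 0 ω = s}).toReal := by
      have hfeq : (fun ω => if S 0 ω = s then (1:ℝ) else 0)
          = Set.indicator {ω | S 0 ω = s} (fun _ => (1:ℝ)) := by
        funext ω; simp [Set.indicator_apply, Set.mem_setOf_eq]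
      rw [hfeq, integral_indicator_const]
      · simp [Measure.real]
      · exact (hSm 0) (measurableSet_singleton s)
    have hppos : 0 < (μ {ω | S 0 ω = s}).toReal :=
      ENNReal.toReal_pos (hp s).ne' (measure_ne_top μ _)
    filter_upwards [hslln] with ω hω
    rw [hmean] at hω
    have h1 : Tendsto (fun n : ℕ => (n:ℝ) *
        ((∑ i ∈ Finset.range n, if S i ω = s then (1:ℝ) else 0) / n)) atTop atTop :=
      Filter.Tendsto.atTop_mul_pos hppos tendsto_natCast_atTop_atTop hω
    refine h1.congr' ?_
    filter_upwards [eventually_ne_atTop 0] with n hn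
    rw [mul_comm, div_mul_cancel₀]
    exact Nat.cast_ne_zero.2 hn
  -- the expected inverse stratum count tends to zero
  have hIlim : ∀ s : 𝒮, Tendsto (fun n => ∫ ω, (Nb s n (D ω))⁻¹ ∂μ) atTop (nhds 0) := by
    intro s
    have h0 : Tendsto (fun n => ∫ ω, (Nb s n (D ω))⁻¹ ∂μ) atTop (nhds (∫ _ω, (0:ℝ) ∂μ)) := by
      apply tendsto_integral_of_dominated_convergence (fun _ => (1:ℝ))
      · intro n; exact (((hNbm s n).comp hDm).inv).aestronglyMeasurable
      · exact integrable_const 1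
      · intro n
        refine ae_of_all _ fun ω => ?_
        rw [Real.norm_eq_abs]
        exact hvabs s n (D ω)
      · filter_upwards [hNtop s] with ω hω
        have h2 : Tendsto (fun n => Nb s n (D ω)) atTop atTop :=
          hω.congr fun n => (hNb_eval s n ω).symm
        have h3 := h2.inv_tendsto_atTop
        exact h3
    simpa using h0
  -- Part 1
  have part1 : (∀ s : 𝒮, ∀ ε : ℝ, 0 < ε → Tendsto (fun n =>
      μ {ω | ε ≤
        |((∑ i ∈ Finset.range n, ξ i ω * (A n i ω - π s) * (if S i ω = s then (1 : ℝ) else 0)) -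
            (∑ i ∈ Finset.range n, (A n i ω - π s) * (if S i ω = s then (1 : ℝ) else 0))) /
          (∑ i ∈ Finset.range n, (if S i ω = s then (1 : ℝ) else 0))|}) atTop (nhds 0)) := by
    intro s ε hε
    set c1 : ℕ → ℕ → (ℕ → ℝ × ℝ × 𝒮 × 𝒳) × (ℕ × ℕ → ℝ) → ℝ :=
      fun n i b => max (-1) (min 1 ((b.2 (n, i) - π s) * indf s i b)) with hc1def
    have hc1m : ∀ n i, Measurable (c1 n i) := by
      intro n i
      apply Measurable.max measurable_const
      apply Measurable.min measurable_const
      exact (((measurable_pi_apply ((n, i) : ℕ × ℕ)).comp measurable_snd).sub_const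
        (π s)).mul (hindm s i)
    have hc1b : ∀ n i b, |c1 n i b| ≤ 1 := by
      intro n i b
      rw [abs_le]
      constructor
      · simp only [hc1def]; exact le_max_left _ _
      · simp only [hc1def]; exact max_le (by norm_num) (min_le_left _ _)
    have hc1sq : ∀ n i b, (c1 n i b) ^ 2 ≤ indf s i b := by
      intro n i b
      rcases hind01 s i b with h | h
      · simp only [hc1def, h, mul_zero]
        norm_num
      · rw [h, ← sq_abs]
        exact pow_le_one₀ (abs_nonneg _) (hc1b n i b)
    have hc1bound : ∀ n b,
        (∑ i ∈ Finset.range n, (c1 n i b) ^ 2) * ((Nb s n b)⁻¹) ^ 2 ≤ (Nb s n b)⁻¹ := by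
      intro n b
      have hsum : ∑ i ∈ Finset.range n, (c1 n i b) ^ 2 ≤ Nb s n b := by
        simp only [hNbdef]
        exact Finset.sum_le_sum fun i _ => hc1sq n i b
      rcases eq_or_ne (Nb s n b) 0 with h | h
      · rw [h]; norm_num
      · calc (∑ i ∈ Finset.range n, (c1 n i b) ^ 2) * ((Nb s n b)⁻¹) ^ 2
            ≤ Nb s n b * ((Nb s n b)⁻¹) ^ 2 := mul_le_mul_of_nonneg_right hsum (sq_nonneg _)
          _ = (Nb s n b)⁻¹ := by rw [sq, ← mul_assoc, mul_inv_cancel₀ h, one_mul]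
    have hkey := BootstrapAux.prob_bound ξ hξm hξindep hξident hξmean hξvar D hDm hInd c1 hc1m hc1b
      (fun n b => (Nb s n b)⁻¹) (fun n b => (Nb s n b)⁻¹)
      (fun n => (hNbm s n).inv) (fun n b => hv_nonneg s n b) (fun n b => hvle s n b)
      (fun n => (hNbm s n).inv) (fun n b => hvabs s n b) hc1bound (hIlim s) hε
    have hc1eval : ∀ n i ω, c1 n i (D ω)
        = (A n i ω - π s) * (if S i ω = s then (1:ℝ) else 0) := by
      intro n i ω
      have h01 := hπ01 s
      have hbnd : -1 ≤ (A n i ω - π s) * (if S i ω = s then (1:ℝ) else 0) ∧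
          (A n i ω - π s) * (if S i ω = s then (1:ℝ) else 0) ≤ 1 := by
        have ht : (if S i ω = s then (1:ℝ) else 0) = 0 ∨
            (if S i ω = s then (1:ℝ) else 0) = 1 := by
          split <;> simp
        rcases ht with ht | ht <;> rcases hA01 n i ω with h | h <;> rw [ht, h] <;>
          constructor <;> nlinarith [h01.1, h01.2]
      have hDA : (D ω).2 (n, i) = A n i ω := by rw [hDdef]
      have heq : c1 n i (D ω) = max (-1) (min 1
          ((A n i ω - π s) * (if S i ω = s then (1:ℝ) else 0))) := by
        simp only [hc1def]
        rw [hDA, hind_eval]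
      rw [heq, min_eq_right hbnd.2, max_eq_right hbnd.1]
    refine hkey.congr fun n => ?_
    congr 1
    ext ω
    simp only [Set.mem_setOf_eq]
    rw [div_eq_mul_inv, ← hNb_eval s n ω]
    have hnum : (∑ i ∈ Finset.range n,
          ξ i ω * (A n i ω - π s) * (if S i ω = s then (1:ℝ) else 0))
        - (∑ i ∈ Finset.range n, (A n i ω - π s) * (if S i ω = s then (1:ℝ) else 0))
        = ∑ i ∈ Finset.range n, (ξ i ω - 1) * c1 n i (D ω) := by
      rw [← Finset.sum_sub_distrib]
      refine Finset.sum_congr rfl fun i _ => ?_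
      rw [hc1eval n i ω]; ring
    rw [hnum]
  -- weighted stratum-size concentration
  have hW : ∀ s : 𝒮, Tendsto (fun n => μ {ω | (1:ℝ)/2 ≤
      |(∑ i ∈ Finset.range n, (ξ i ω - 1) * (if S i ω = s then (1:ℝ) else 0)) *
        (∑ i ∈ Finset.range n, (if S i ω = s then (1:ℝ) else 0))⁻¹|}) atTop (nhds 0) := by
    intro s
    have hcb : ∀ (n i : ℕ) b, |indf s i b| ≤ 1 := by
      intro n i b; rcases hind01 s i b with h | h <;> rw [h] <;> norm_num
    have hbound : ∀ n b, (∑ i ∈ Finset.range n, (indf s i b) ^ 2) * ((Nb s n b)⁻¹) ^ 2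
        ≤ (Nb s n b)⁻¹ := by
      intro n b
      have hsum : ∑ i ∈ Finset.range n, (indf s i b) ^ 2 ≤ Nb s n b := by
        simp only [hNbdef]
        refine Finset.sum_le_sum fun i _ => ?_
        rcases hind01 s i b with h | h <;> rw [h] <;> norm_num
      rcases eq_or_ne (Nb s n b) 0 with h | h
      · rw [h]; norm_num
      · calc (∑ i ∈ Finset.range n, (indf s i b) ^ 2) * ((Nb s n b)⁻¹) ^ 2
            ≤ Nb s n b * ((Nb s n b)⁻¹) ^ 2 := mul_le_mul_of_nonneg_right hsum (sq_nonneg _)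
          _ = (Nb s n b)⁻¹ := by rw [sq, ← mul_assoc, mul_inv_cancel₀ h, one_mul]
    have hkey := BootstrapAux.prob_bound ξ hξm hξindep hξident hξmean hξvar D hDm hInd
      (fun n i b => indf s i b) (fun n i => hindm s i) hcb
      (fun n b => (Nb s n b)⁻¹) (fun n b => (Nb s n b)⁻¹)
      (fun n => (hNbm s n).inv) (fun n b => hv_nonneg s n b) (fun n b => hvle s n b)
      (fun n => (hNbm s n).inv) (fun n b => hvabs s n b) hbound (hIlim s)
      (show (0:ℝ) < 1/2 by norm_num)
    exact hkey.congr fun n => rfl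
  -- the event that a stratum is empty becomes negligible
  have hB4t : ∀ s : 𝒮, Tendsto (fun n => μ {ω |
      (∑ i ∈ Finset.range n, (if S i ω = s then (1:ℝ) else 0)) = 0}) atTop (nhds 0) := by
    intro s
    have hmeas : ∀ n : ℕ, MeasurableSet {ω |
        (∑ i ∈ Finset.range n, (if S i ω = s then (1:ℝ) else 0)) = 0} := by
      intro n
      have hm : Measurable (fun ω => ∑ i ∈ Finset.range n, (if S i ω = s then (1:ℝ) else 0)) :=
        Finset.measurable_sum _ fun i _ =>
          Measurable.ite ((hSm i) (measurableSet_singleton s)) measurable_const measurable_const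
      exact hm (measurableSet_singleton 0)
    have hmono : Antitone (fun n => {ω |
        (∑ i ∈ Finset.range n, (if S i ω = s then (1:ℝ) else 0)) = 0}) := by
      intro a b hab ω hω
      simp only [Set.mem_setOf_eq] at hω ⊢
      have hsub : Finset.range a ⊆ Finset.range b := Finset.range_subset_range.2 hab
      have h1 : (∑ i ∈ Finset.range a, (if S i ω = s then (1:ℝ) else 0))
          ≤ ∑ i ∈ Finset.range b, (if S i ω = s then (1:ℝ) else 0) :=
        Finset.sum_le_sum_of_subset_of_nonneg hsub (fun i _ _ => by split <;> norm_num)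
      have h2 : 0 ≤ ∑ i ∈ Finset.range a, (if S i ω = s then (1:ℝ) else 0) :=
        Finset.sum_nonneg fun i _ => by split <;> norm_num
      linarith [hω]
    have h0 : μ (⋂ n, {ω |
        (∑ i ∈ Finset.range n, (if S i ω = s then (1:ℝ) else 0)) = 0}) = 0 := by
      refine measure_mono_null ?_ (ae_iff.1 (hNtop s))
      intro ω hω
      simp only [Set.mem_iInter, Set.mem_setOf_eq] at hω ⊢
      intro hT
      obtain ⟨m, hm⟩ := (hT.eventually_ge_atTop 1).exists
      rw [hω m] at hm
      norm_num at hm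
    have hlim := tendsto_measure_iInter_atTop (fun n => (hmeas n).nullMeasurableSet) hmono
      ⟨0, measure_ne_top μ _⟩
    rw [h0] at hlim
    simpa [Function.comp_def] using hlim
  refine ⟨part1, ?_⟩
  intro ε hε
  have hε' : 0 < ε / 8 := by linarith
  set B1 : ℕ → 𝒮 → Set Ω := fun n s => {ω | ε/8 ≤
    |(∑ i ∈ Finset.range n, (A n i ω - π s) * (if S i ω = s then (1:ℝ) else 0)) /
      (∑ i ∈ Finset.range n, (if S i ω = s then (1:ℝ) else 0))|} with hB1def
  set B2 : ℕ → 𝒮 → Set Ω := fun n s => {ω | ε/8 ≤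
    |((∑ i ∈ Finset.range n, ξ i ω * (A n i ω - π s) * (if S i ω = s then (1:ℝ) else 0)) -
       (∑ i ∈ Finset.range n, (A n i ω - π s) * (if S i ω = s then (1:ℝ) else 0))) /
      (∑ i ∈ Finset.range n, (if S i ω = s then (1:ℝ) else 0))|} with hB2def
  set B3 : ℕ → 𝒮 → Set Ω := fun n s => {ω | (1:ℝ)/2 ≤
    |(∑ i ∈ Finset.range n, (ξ i ω - 1) * (if S i ω = s then (1:ℝ) else 0)) *
      (∑ i ∈ Finset.range n, (if S i ω = s then (1:ℝ) else 0))⁻¹|} with hB3def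
  set B4 : ℕ → 𝒮 → Set Ω := fun n s => {ω |
    (∑ i ∈ Finset.range n, (if S i ω = s then (1:ℝ) else 0)) = 0} with hB4def
  have hB1t : ∀ s, Tendsto (fun n => μ (B1 n s)) atTop (nhds 0) := by
    intro s
    simpa only [hB1def] using hD s (ε/8) hε'
  have hB2t : ∀ s, Tendsto (fun n => μ (B2 n s)) atTop (nhds 0) := by
    intro s
    simpa only [hB2def] using part1 s (ε/8) hε'
  have hB3t : ∀ s, Tendsto (fun n => μ (B3 n s)) atTop (nhds 0) := by
    intro s
    simpa only [hB3def] using hW s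
  have hB4t' : ∀ s, Tendsto (fun n => μ (B4 n s)) atTop (nhds 0) := by
    intro s
    simpa only [hB4def] using hB4t s
  have hmb : ∀ n, μ {ω | ε ≤
      Finset.univ.sup' Finset.univ_nonempty (fun s : 𝒮 =>
        |(∑ i ∈ Finset.range n, ξ i ω * (A n i ω - π s) * (if S i ω = s then (1 : ℝ) else 0)) /
          (∑ i ∈ Finset.range n, ξ i ω * (if S i ω = s then (1 : ℝ) else 0))|)}
      ≤ ∑ s ∈ Finset.univ, (μ (B1 n s) + μ (B2 n s) + μ (B3 n s) + μ (B4 n s)) := by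
    intro n
    have hincl : {ω | ε ≤
        Finset.univ.sup' Finset.univ_nonempty (fun s : 𝒮 =>
          |(∑ i ∈ Finset.range n, ξ i ω * (A n i ω - π s) * (if S i ω = s then (1 : ℝ) else 0)) /
            (∑ i ∈ Finset.range n, ξ i ω * (if S i ω = s then (1 : ℝ) else 0))|)}
        ⊆ ⋃ s ∈ (Finset.univ : Finset 𝒮), (B1 n s ∪ B2 n s ∪ B3 n s ∪ B4 n s) := by
      intro ω hω
      by_contra hnot
      simp only [Set.mem_iUnion, Set.mem_union, Set.mem_setOf_eq, Finset.mem_univ,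
        exists_prop, true_and, not_exists, not_or, not_le,
        hB1def, hB2def, hB3def, hB4def] at hnot
      simp only [Set.mem_setOf_eq] at hω
      have hsup : (Finset.univ.sup' Finset.univ_nonempty (fun s : 𝒮 =>
          |(∑ i ∈ Finset.range n, ξ i ω * (A n i ω - π s) * (if S i ω = s then (1 : ℝ) else 0)) /
            (∑ i ∈ Finset.range n, ξ i ω * (if S i ω = s then (1 : ℝ) else 0))|)) < ε := by
        rw [Finset.sup'_lt_iff]
        intro s _
        obtain ⟨⟨⟨h1, h2⟩, h3⟩, h4⟩ := hnot s
        set Nr := (∑ i ∈ Finset.range n, (if S i ω = s then (1:ℝ) else 0)) with hNrdef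
        set Dn := (∑ i ∈ Finset.range n,
          (A n i ω - π s) * (if S i ω = s then (1:ℝ) else 0)) with hDndef
        set Dw := (∑ i ∈ Finset.range n,
          ξ i ω * (A n i ω - π s) * (if S i ω = s then (1:ℝ) else 0)) with hDwdef
        set nw := (∑ i ∈ Finset.range n, ξ i ω * (if S i ω = s then (1:ℝ) else 0)) with hnwdef
        have hNr0 : 0 ≤ Nr := by
          rw [hNrdef]; exact Finset.sum_nonneg fun i _ => by split <;> norm_num
        have hNrpos : 0 < Nr := lt_of_le_of_ne hNr0 (Ne.symm h4)
        have hsub : (∑ i ∈ Finset.range n, (ξ i ω - 1) * (if S i ω = s then (1:ℝ) else 0))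
            = nw - Nr := by
          rw [hnwdef, hNrdef, ← Finset.sum_sub_distrib]
          exact Finset.sum_congr rfl fun i _ => by ring
        rw [hsub] at h3
        have h3' : |nw - Nr| < Nr / 2 := by
          rw [abs_mul, abs_inv, abs_of_pos hNrpos, ← div_eq_mul_inv,
            div_lt_iff₀ hNrpos] at h3
          linarith
        have hnwhalf : Nr / 2 < nw := by
          have hb := abs_lt.1 h3'
          linarith [hb.1]
        have hnwpos : 0 < nw := by linarith
        have h1' : |Dn| < ε / 8 * Nr := by
          rw [abs_div, abs_of_pos hNrpos, div_lt_iff₀ hNrpos] at h1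
          linarith
        have h2' : |Dw - Dn| < ε / 8 * Nr := by
          rw [abs_div, abs_of_pos hNrpos, div_lt_iff₀ hNrpos] at h2
          linarith
        have hDwb : |Dw| < ε / 4 * Nr := by
          have h5 : |Dw| ≤ |Dw - Dn| + |Dn| := by
            calc |Dw| = |(Dw - Dn) + Dn| := by ring_nf
              _ ≤ |Dw - Dn| + |Dn| := abs_add_le _ _
          linarith
        show |Dw / nw| < ε
        rw [abs_div, abs_of_pos hnwpos, div_lt_iff₀ hnwpos]
        nlinarith [hNrpos, hε, hnwhalf, hDwb]
      linarith [hω, hsup]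
    refine le_trans (measure_mono hincl) (le_trans (measure_biUnion_finset_le _ _) ?_)
    refine Finset.sum_le_sum fun s _ => ?_
    calc μ (B1 n s ∪ B2 n s ∪ B3 n s ∪ B4 n s)
        ≤ μ (B1 n s ∪ B2 n s ∪ B3 n s) + μ (B4 n s) := measure_union_le _ _
      _ ≤ (μ (B1 n s ∪ B2 n s) + μ (B3 n s)) + μ (B4 n s) := by
          gcongr
          exact measure_union_le _ _
      _ ≤ ((μ (B1 n s) + μ (B2 n s)) + μ (B3 n s)) + μ (B4 n s) := by
          gcongr
          exact measure_union_le _ _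
  have hsumt : Tendsto (fun n => ∑ s ∈ Finset.univ,
      (μ (B1 n s) + μ (B2 n s) + μ (B3 n s) + μ (B4 n s))) atTop (nhds 0) := by
    have h0 : ∀ s : 𝒮, Tendsto (fun n =>
        μ (B1 n s) + μ (B2 n s) + μ (B3 n s) + μ (B4 n s)) atTop (nhds 0) := by
      intro s
      have := (((hB1t s).add (hB2t s)).add (hB3t s)).add (hB4t' s)
      simpa using this
    have := tendsto_finset_sum (Finset.univ : Finset 𝒮) (fun s _ => h0 s)
    simpa using this
  exact tendsto_of_tendsto_of_tendsto_of_le_of_le tendsto_const_nhds hsumt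
    (fun n => zero_le) hmb
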